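/- arXiv:1506.08011 — 8 statements merged into one kernel-verified Lean document; each statement's English description precedes it below -/
import Mathlib

section
/- Let q be a nonzero complex number that is not a root of unity, and let p be a Laurent polynomial in n variables over ℂ. If p(q^{r_1}, ..., q^{r_n}) = 0 for all natural numbers r_1, ..., r_n, then p = 0. -/
open MvPolynomial

private lemma qpow_inj {q : ℂ} (hq : q ≠ 0) (hroot : ∀ k : ℕ, 0 < k → q ^ k ≠ 1) :
    Function.Injective fun r : ℕ => q ^ r := by
  intro a b hab
  by_contra hne
  wlog hlt : a < b generalizing a b
  · exact this hab.symm (Ne.symm hne) (by omega)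
  have : q ^ a * q ^ (b - a) = q ^ a * 1 := by
    rw [← pow_add, mul_one]
    rw [show a + (b - a) = b by omega]
    exact hab.symm
  have h1 : q ^ (b - a) = 1 := mul_left_cancel₀ (pow_ne_zero a hq) this
  exact hroot (b - a) (by omega) h1

private lemma poly_zero {q : ℂ} (hq : q ≠ 0) (hroot : ∀ k : ℕ, 0 < k → q ^ k ≠ 1)
    (f : Polynomial ℂ) (hf : ∀ r : ℕ, f.eval (q ^ r) = 0) : f = 0 := by
  refine Polynomial.eq_zero_of_infinite_isRoot f ?_
  refine Set.Infinite.mono ?_ (Set.infinite_range_of_injective (qpow_inj hq hroot))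
  rintro _ ⟨r, rfl⟩
  exact hf r

private lemma mv_zero {q : ℂ} (hq : q ≠ 0) (hroot : ∀ k : ℕ, 0 < k → q ^ k ≠ 1) :
    ∀ {n : ℕ} (P : MvPolynomial (Fin n) ℂ),
      (∀ r : Fin n → ℕ, eval (fun i => q ^ r i) P = 0) → P = 0 := by
  intro n
  induction n with
  | zero =>
    intro P hP
    rw [eq_C_of_isEmpty P]
    have := hP finZeroElim
    rw [eq_C_of_isEmpty P] at this
    rw [eval_C] at this
    rw [this, map_zero]
  | succ n ih =>
    intro P hP
    apply (finSuccEquiv ℂ n).injective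
    rw [map_zero]
    apply Polynomial.ext
    intro k
    rw [Polynomial.coeff_zero]
    refine ih _ fun r => ?_
    rw [← coeff_eval_eq_eval_coeff]
    have hzero : Polynomial.map (eval fun i => q ^ r i) (finSuccEquiv ℂ n P) = 0 := by
      refine poly_zero hq hroot _ fun r0 => ?_
      rw [← eval_eq_eval_mv_eval']
      have hfun : (fun i : Fin (n+1) => q ^ Fin.cons r0 r i)
          = Fin.cons (q ^ r0) (fun i => q ^ r i) := by
        funext i
        refine Fin.cases ?_ ?_ i <;> simp
      rw [← hfun]
      exact hP _
    rw [hzero, Polynomial.coeff_zero]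

/-- Let `q` be a nonzero complex number that is not a root of unity, and let
`p` be a Laurent polynomial in `n` variables over `ℂ` (modelled as a finitely supported
function from exponent vectors in `Fin n →₀ ℤ` to coefficients in `ℂ`).  If
`p(q^{r 1}, ..., q^{r n}) = 0` for all natural numbers `r 1, ..., r n`, then `p = 0`. -/
theorem laurent_vanishing_on_powers (n : ℕ) (q : ℂ) (hq : q ≠ 0)
    (hroot : ∀ k : ℕ, 0 < k → q ^ k ≠ 1)
    (p : (Fin n →₀ ℤ) →₀ ℂ)
    (h : ∀ r : Fin n → ℕ,
      (p.sum fun e c => c * ∏ i : Fin n, (q ^ (r i)) ^ (e i)) = 0) :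
    p = 0 := by
  classical
  -- shift exponents
  set d : Fin n → ℕ := fun i => p.support.sup fun e => (-(e i)).toNat with hd
  have hnn : ∀ e ∈ p.support, ∀ i, 0 ≤ e i + (d i : ℤ) := by
    intro e he i
    have h1 : (-(e i)).toNat ≤ d i := Finset.le_sup (f := fun e => (-(e i)).toNat) he
    have h2 : -(e i) ≤ ((-(e i)).toNat : ℤ) := Int.self_le_toNat _
    omega
  set shift : (Fin n →₀ ℤ) → (Fin n →₀ ℕ) :=
    fun e => Finsupp.equivFunOnFinite.symm (fun i => (e i + (d i : ℤ)).toNat) with hshift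
  have hshift_apply : ∀ e i, (shift e) i = (e i + (d i : ℤ)).toNat := fun e i => rfl
  have hshift_inj : ∀ e ∈ p.support, ∀ e' ∈ p.support, shift e = shift e' → e = e' := by
    intro e he e' he' hee
    ext i
    have : (shift e) i = (shift e') i := by rw [hee]
    simp only [hshift_apply] at this
    have h1 := hnn e he i
    have h2 := hnn e' he' i
    omega
  set P : MvPolynomial (Fin n) ℂ := p.sum fun e c => monomial (shift e) c with hP
  have hPzero : P = 0 := by
    refine mv_zero hq hroot P fun r => ?_
    rw [hP, map_finsuppSum]
    have key : ∀ e ∈ p.support,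
        eval (fun i => q ^ r i) (monomial (shift e) (p e))
          = (∏ i : Fin n, (q ^ r i) ^ (d i : ℤ)) * (p e * ∏ i : Fin n, (q ^ (r i)) ^ (e i)) := by
      intro e he
      rw [eval_monomial, Finsupp.prod_pow]
      rw [mul_left_comm]
      congr 1
      rw [← Finset.prod_mul_distrib]
      refine Finset.prod_congr rfl fun i _ => ?_
      have h0 : ((shift e) i : ℤ) = e i + (d i : ℤ) := by
        rw [hshift_apply]
        exact Int.toNat_of_nonneg (hnn e he i)
      calc (q ^ r i) ^ ((shift e) i)
          = (q ^ r i) ^ (((shift e) i : ℤ)) := (zpow_natCast _ _).symm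
        _ = (q ^ r i) ^ (e i + (d i : ℤ)) := by rw [h0]
        _ = (q ^ r i) ^ (d i : ℤ) * (q ^ r i) ^ (e i) := by
            rw [zpow_add₀ (pow_ne_zero _ hq), mul_comm]
    rw [Finsupp.sum, Finset.sum_congr rfl key, ← Finset.mul_sum]
    have h0 := h r
    rw [Finsupp.sum] at h0
    rw [h0, mul_zero]
  -- conclude p = 0
  ext e
  rw [Finsupp.coe_zero, Pi.zero_apply]
  by_cases he : e ∈ p.support
  · have hc : coeff (shift e) P = p e := by
      rw [hP, Finsupp.sum, coeff_sum]
      rw [Finset.sum_eq_single e]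
      · rw [coeff_monomial, if_pos rfl]
      · intro e' he' hne
        rw [coeff_monomial, if_neg]
        exact fun hs => hne (hshift_inj e' he' e he hs)
      · intro hne
        exact absurd he hne
    rw [← hc, hPzero]
    simp
  · simpa using he
end

section
/- Let q ∈ ℂ* be a nonzero complex number that is not a root of unity and let f be a nonzero Laurent polynomial in n variables over ℂ. Then there exist b_1, ..., b_n ∈ ℂ* such that f(q^{i_1} b_1, ..., q^{i_n} b_n) ≠ 0 for all integers i_1, ..., i_n. -/
open Polynomial Finset

lemma zpow_sum₀ {ι : Type*} {t : ℂ} (ht : t ≠ 0) (s : Finset ι) (g : ι → ℤ) :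
    t ^ (∑ j ∈ s, g j) = ∏ j ∈ s, t ^ g j := by
  induction s using Finset.cons_induction with
  | empty => simp
  | cons a s ha ih => rw [Finset.sum_cons, Finset.prod_cons, zpow_add₀ ht, ih]

lemma exists_sep (n : ℕ) (D : Finset (Fin n →₀ ℤ)) (h0 : (0 : Fin n →₀ ℤ) ∉ D) :
    ∃ m : Fin n → ℤ, ∀ d ∈ D, (∑ j, m j * d j) ≠ 0 := by
  classical
  set p : (Fin n →₀ ℤ) → Polynomial ℤ :=
    fun d => ∑ j : Fin n, Polynomial.C (d j) * Polynomial.X ^ (j : ℕ) with hp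
  have hcoeff : ∀ d (j : Fin n), (p d).coeff j = d j := by
    intro d j
    rw [hp]
    simp only [Polynomial.finset_sum_coeff, Polynomial.coeff_C_mul, Polynomial.coeff_X_pow]
    rw [Finset.sum_eq_single j]
    · simp
    · intro j' _ hj'
      have : ¬ ((j : ℕ) = (j' : ℕ)) := fun h => hj' (Fin.val_injective h.symm)
      simp [this]
    · simp
  have hpne : ∀ d ∈ D, p d ≠ 0 := by
    intro d hd hcontra
    have hdne : d ≠ 0 := fun h => h0 (h ▸ hd)
    obtain ⟨j, hj⟩ := Finsupp.ne_iff.mp hdne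
    apply hj
    have := hcoeff d j
    rw [hcontra] at this
    simpa using this.symm
  have hfin : {x : ℤ | ∃ d ∈ D, (p d).IsRoot x}.Finite := by
    have : {x : ℤ | ∃ d ∈ D, (p d).IsRoot x} = ⋃ d ∈ (D : Set _), {x | (p d).IsRoot x} := by
      ext x; simp
    rw [this]
    exact Set.Finite.biUnion D.finite_toSet fun d hd =>
      Polynomial.finite_setOf_isRoot (hpne d hd)
  obtain ⟨x, hx⟩ := hfin.infinite_compl.nonempty
  refine ⟨fun j => x ^ (j : ℕ), fun d hd => ?_⟩
  have heval : (p d).eval x = ∑ j : Fin n, x ^ (j : ℕ) * d j := by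
    rw [hp]
    rw [Polynomial.eval_finset_sum]
    simp [mul_comm]
  intro hzero
  exact hx ⟨d, hd, by rw [Polynomial.IsRoot, heval, hzero]⟩

/-- Let `q ∈ ℂ*` not be a root of unity and let `f` be a nonzero Laurent
polynomial in `n` variables over `ℂ` (modelled as a finitely supported function from
exponent vectors in `Fin n →₀ ℤ` to coefficients in `ℂ`).  Then there exist nonzero
`b 1, ..., b n ∈ ℂ*` such that `f(q^{i 1} * b 1, ..., q^{i n} * b n) ≠ 0` for all
integers `i 1, ..., i n`. -/
theorem exists_point_nonvanishing_on_q_orbit (n : ℕ) (q : ℂ) (hq : q ≠ 0)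
    (hroot : ∀ k : ℕ, 0 < k → q ^ k ≠ 1)
    (f : (Fin n →₀ ℤ) →₀ ℂ) (hf : f ≠ 0) :
    ∃ b : Fin n → ℂ, (∀ j, b j ≠ 0) ∧
      ∀ i : Fin n → ℤ,
        (f.sum fun e c => c * ∏ j : Fin n, (q ^ (i j) * b j) ^ (e j)) ≠ 0 := by
  classical
  have hsupp : f.support.Nonempty := Finsupp.support_nonempty_iff.mpr hf
  set S := f.support with hS
  set D : Finset (Fin n →₀ ℤ) :=
    ((S ×ˢ S).filter fun p => p.1 ≠ p.2).image fun p => p.1 - p.2 with hD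
  have h0 : (0 : Fin n →₀ ℤ) ∉ D := by
    intro h
    rw [hD, Finset.mem_image] at h
    obtain ⟨⟨e, e'⟩, hmem, heq⟩ := h
    rw [Finset.mem_filter] at hmem
    exact hmem.2 (sub_eq_zero.mp heq)
  obtain ⟨m, hm⟩ := exists_sep n D h0
  set L : (Fin n →₀ ℤ) → ℤ := fun e => ∑ j, m j * e j with hL
  have hLinj : ∀ e ∈ S, ∀ e' ∈ S, e ≠ e' → L e ≠ L e' := by
    intro e he e' he' hne heq
    have hmemD : e - e' ∈ D := by
      rw [hD, Finset.mem_image]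
      exact ⟨(e, e'), Finset.mem_filter.mpr ⟨Finset.mem_product.mpr ⟨he, he'⟩, hne⟩, rfl⟩
    apply hm _ hmemD
    have : ∀ j : Fin n, m j * (e - e') j = m j * e j - m j * e' j := by
      intro j; rw [Finsupp.sub_apply, mul_sub]
    rw [Finset.sum_congr rfl fun j _ => this j, Finset.sum_sub_distrib]
    rw [show (∑ x : Fin n, m x * e x) = L e from rfl,
      show (∑ x : Fin n, m x * e' x) = L e' from rfl, heq, sub_self]
  set K : ℤ := (S.image L).min' (hsupp.image L) with hK
  have hKle : ∀ e ∈ S, K ≤ L e := fun e he =>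
    Finset.min'_le _ _ (Finset.mem_image_of_mem L he)
  set N : (Fin n →₀ ℤ) → ℕ := fun e => (L e - K).toNat with hN
  have hNcast : ∀ e ∈ S, (N e : ℤ) = L e - K := fun e he =>
    Int.toNat_of_nonneg (sub_nonneg.mpr (hKle e he))
  have hNinj : ∀ e ∈ S, ∀ e' ∈ S, e ≠ e' → N e ≠ N e' := by
    intro e he e' he' hne heq
    apply hLinj e he e' he' hne
    have := hNcast e he
    rw [heq, hNcast e' he'] at this
    omega
  set P : (Fin n → ℤ) → Polynomial ℂ := fun i =>
    ∑ e ∈ S, Polynomial.C (f e * q ^ (∑ j, i j * e j)) * Polynomial.X ^ (N e) with hP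
  have hPcoeff : ∀ i, ∀ e0 ∈ S, (P i).coeff (N e0) = f e0 * q ^ (∑ j, i j * e0 j) := by
    intro i e0 he0
    rw [hP]
    simp only [Polynomial.finset_sum_coeff, Polynomial.coeff_C_mul, Polynomial.coeff_X_pow]
    rw [Finset.sum_eq_single e0]
    · simp
    · intro e he hne
      have : ¬ (N e0 = N e) := fun h => hNinj e he e0 he0 hne h.symm
      simp [this]
    · intro h; exact absurd he0 h
  have hPne : ∀ i, P i ≠ 0 := by
    intro i hcontra
    obtain ⟨e0, he0⟩ := hsupp
    have := hPcoeff i e0 he0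
    rw [hcontra] at this
    simp only [Polynomial.coeff_zero] at this
    exact (mul_ne_zero (Finsupp.mem_support_iff.mp he0) (zpow_ne_zero _ hq)) this.symm
  -- find t avoiding 0 and all roots
  have hBcount : (({0} : Set ℂ) ∪ ⋃ i : Fin n → ℤ, {t | (P i).IsRoot t}).Countable := by
    apply Set.Countable.union (Set.countable_singleton 0)
    exact Set.countable_iUnion fun i =>
      (Polynomial.finite_setOf_isRoot (hPne i)).countable
  have : ∃ t : ℂ, t ∉ (({0} : Set ℂ) ∪ ⋃ i : Fin n → ℤ, {t | (P i).IsRoot t}) := by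
    by_contra h
    push_neg at h
    exact not_countable_complex (hBcount.mono fun t _ => h t)
  obtain ⟨t, ht⟩ := this
  have ht0 : t ≠ 0 := fun h => ht (Set.mem_union_left _ (h ▸ rfl))
  have htroot : ∀ i, ¬ (P i).IsRoot t := by
    intro i hi
    exact ht (Set.mem_union_right _ (Set.mem_iUnion.mpr ⟨i, hi⟩))
  refine ⟨fun j => t ^ (m j), fun j => zpow_ne_zero _ ht0, fun i => ?_⟩
  have key : (f.sum fun e c => c * ∏ j : Fin n, (q ^ (i j) * t ^ (m j)) ^ (e j))
      = t ^ K * (P i).eval t := by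
    rw [Finsupp.sum, ← hS]
    have hterm : ∀ e ∈ S,
        f e * ∏ j : Fin n, (q ^ (i j) * t ^ (m j)) ^ (e j)
        = t ^ K * (f e * q ^ (∑ j, i j * e j) * t ^ (N e)) := by
      intro e he
      have hprod : ∏ j : Fin n, (q ^ (i j) * t ^ (m j)) ^ (e j)
          = q ^ (∑ j, i j * e j) * t ^ (∑ j, m j * e j) := by
        rw [zpow_sum₀ hq, zpow_sum₀ ht0, ← Finset.prod_mul_distrib]
        refine Finset.prod_congr rfl fun j _ => ?_
        rw [mul_zpow, ← zpow_mul, ← zpow_mul]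
      rw [hprod]
      have htL : t ^ (∑ j : Fin n, m j * e j) = t ^ K * t ^ (N e) := by
        rw [← zpow_natCast t (N e), hNcast e he, ← zpow_add₀ ht0]
        congr 1
        rw [hL]
        ring
      rw [htL]
      ring
    rw [Finset.sum_congr rfl hterm, ← Finset.mul_sum]
    congr 1
    rw [hP, Polynomial.eval_finset_sum]
    refine Finset.sum_congr rfl fun e he => ?_
    simp
  rw [key]
  exact mul_ne_zero (zpow_ne_zero _ ht0) (htroot i)
end

section
/- Let R be a (possibly noncommutative) ring containing an invertible central element q with q − q^{−1} invertible, and let e, y, w ∈ R satisfy e·y − y·e = w and w·y = q^2·y·w. Then for every positive integer a, e·y^a = y^a·e + q^{a−1}·[a]·y^{a−1}·w, where [a] = (q^a − q^{−a})/(q − q^{−1}). -/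
/-- Let `R` be a (possibly noncommutative) ring containing an invertible
central element `q` with `q - q⁻¹` invertible (witnessed by a unit `u`), and let
`e, y, w ∈ R` satisfy `e·y - y·e = w` and `w·y = q²·y·w`.  Then for every positive
integer `a`, `e·y^a = y^a·e + q^(a-1)·[a]·y^(a-1)·w`, where
`[a] = (q^a - q^(-a))·(q - q⁻¹)⁻¹`. -/
theorem q_commutation_E_power (R : Type*) [Ring R] (q u : Rˣ)
    (hcentral : ∀ r : R, (q : R) * r = r * q)
    (hu : (u : R) = (q : R) - ((q⁻¹ : Rˣ) : R))
    (e y w : R)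
    (hey : e * y - y * e = w)
    (hwy : w * y = (q : R) ^ 2 * (y * w))
    (a : ℕ) (ha : 0 < a) :
    e * y ^ a = y ^ a * e
      + (q : R) ^ (a - 1) * ((((q : R) ^ a - ((q⁻¹ : Rˣ) : R) ^ a) * ((u⁻¹ : Rˣ) : R))
          * (y ^ (a - 1) * w)) := by
  -- commutation facts
  have hq : ∀ r : R, Commute (q : R) r := fun r => hcentral r
  have hqi : ∀ r : R, Commute ((q⁻¹ : Rˣ) : R) r := fun r => (hq r).units_inv_left
  have hu_c : ∀ r : R, Commute (u : R) r := fun r => by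
    rw [hu]; exact (hq r).sub_left (hqi r)
  have hui : ∀ r : R, Commute ((u⁻¹ : Rˣ) : R) r := fun r => (hu_c r).units_inv_left
  have he : e * y = y * e + w := by
    have h := sub_eq_iff_eq_add.mp hey
    rw [h, add_comm]
  -- membership in the center
  have hQm : (q : R) ∈ Subring.center R := Subring.mem_center_iff.mpr fun r => (hq r).symm
  have hQim : ((q⁻¹ : Rˣ) : R) ∈ Subring.center R :=
    Subring.mem_center_iff.mpr fun r => (hqi r).symm
  have hum : (u : R) ∈ Subring.center R := Subring.mem_center_iff.mpr fun r => (hu_c r).symm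
  have huim : ((u⁻¹ : Rˣ) : R) ∈ Subring.center R :=
    Subring.mem_center_iff.mpr fun r => (hui r).symm
  set Q : Subring.center R := ⟨(q : R), hQm⟩ with hQdef
  set Qi : Subring.center R := ⟨((q⁻¹ : Rˣ) : R), hQim⟩ with hQidef
  set U : Subring.center R := ⟨(u : R), hum⟩ with hUdef
  set Ui : Subring.center R := ⟨((u⁻¹ : Rˣ) : R), huim⟩ with hUidef
  have h1 : Q * Qi = 1 := by ext; simp [hQdef, hQidef]
  have h2 : U * Ui = 1 := by ext; simp [hUdef, hUidef]
  have h3 : U = Q - Qi := by ext; simp [hQdef, hQidef, hUdef, hu]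
  -- the scalar identity needed for the inductive step
  have key : ∀ b : ℕ,
      (1 : Subring.center R) + Q ^ b * ((Q ^ (b+1) - Qi ^ (b+1)) * Ui) * Q ^ 2
        = Q ^ (b+1) * ((Q ^ (b+1+1) - Qi ^ (b+1+1)) * Ui) := by
    intro b
    have hpow : Q ^ (b+1) * Qi ^ (b+1) = 1 := by rw [← mul_pow, h1, one_pow]
    linear_combination ((Qi - Q) * Ui) * hpow + Ui * h3 - h2
  -- reduce to the case a = b + 1
  obtain ⟨b, rfl⟩ : ∃ b, a = b + 1 := ⟨a - 1, (Nat.succ_pred_eq_of_pos ha).symm⟩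
  simp only [Nat.add_sub_cancel]
  clear ha
  induction b with
  | zero =>
      simpa [← hu, Units.mul_inv] using he
  | succ b ih =>
      have step1 : e * y ^ (b + 1 + 1) = (e * y ^ (b + 1)) * y := by
        rw [pow_succ, ← mul_assoc]
      rw [step1, ih, add_mul]
      have t1 : (y ^ (b+1) * e) * y = y ^ (b+1+1) * e + y ^ (b+1) * w := by
        rw [mul_assoc, he, mul_add, pow_succ y (b+1), mul_assoc]
      have hq2b : (q : R) ^ 2 * y ^ b = y ^ b * (q : R) ^ 2 := ((hq (y ^ b)).pow_left 2).eq
      have swap : y ^ b * ((q : R) ^ 2 * (y * w)) = (q : R) ^ 2 * (y ^ b * (y * w)) := by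
        rw [← mul_assoc, ← hq2b, mul_assoc]
      have ypow : y ^ b * (y * w) = y ^ (b+1) * w := by
        rw [pow_succ y b, mul_assoc]
      have t2 : (q : R) ^ b * (((q : R) ^ (b+1) - ((q⁻¹ : Rˣ) : R) ^ (b+1))
            * ((u⁻¹ : Rˣ) : R) * (y ^ b * w)) * y
          = ((q : R) ^ b * (((q : R) ^ (b+1) - ((q⁻¹ : Rˣ) : R) ^ (b+1))
            * ((u⁻¹ : Rˣ) : R)) * (q : R) ^ 2) * (y ^ (b+1) * w) := by
        calc (q : R) ^ b * (((q : R) ^ (b+1) - ((q⁻¹ : Rˣ) : R) ^ (b+1))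
              * ((u⁻¹ : Rˣ) : R) * (y ^ b * w)) * y
            = (q : R) ^ b * (((q : R) ^ (b+1) - ((q⁻¹ : Rˣ) : R) ^ (b+1))
              * (((u⁻¹ : Rˣ) : R) * (y ^ b * (w * y)))) := by
              simp only [mul_assoc]
          _ = (q : R) ^ b * (((q : R) ^ (b+1) - ((q⁻¹ : Rˣ) : R) ^ (b+1))
              * (((u⁻¹ : Rˣ) : R) * ((q : R) ^ 2 * (y ^ (b+1) * w)))) := by
              rw [hwy, swap, ypow]
          _ = ((q : R) ^ b * (((q : R) ^ (b+1) - ((q⁻¹ : Rˣ) : R) ^ (b+1))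
              * ((u⁻¹ : Rˣ) : R)) * (q : R) ^ 2) * (y ^ (b+1) * w) := by
              simp only [mul_assoc]
      rw [t1, t2, add_assoc]
      -- coefficient identity in R
      have keyR : (1 : R) + (q : R) ^ b * (((q : R) ^ (b+1) - ((q⁻¹ : Rˣ) : R) ^ (b+1))
            * ((u⁻¹ : Rˣ) : R)) * (q : R) ^ 2
          = (q : R) ^ (b+1) * (((q : R) ^ (b+1+1) - ((q⁻¹ : Rˣ) : R) ^ (b+1+1))
            * ((u⁻¹ : Rˣ) : R)) := by
        have h := congrArg (Subtype.val) (key b)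
        simpa [hQdef, hQidef, hUidef] using h
      have hsum : y ^ (b+1) * w + ((q : R) ^ b * (((q : R) ^ (b+1)
            - ((q⁻¹ : Rˣ) : R) ^ (b+1)) * ((u⁻¹ : Rˣ) : R)) * (q : R) ^ 2)
            * (y ^ (b+1) * w)
          = (q : R) ^ (b+1) * ((((q : R) ^ (b+1+1) - ((q⁻¹ : Rˣ) : R) ^ (b+1+1))
            * ((u⁻¹ : Rˣ) : R)) * (y ^ (b+1) * w)) := by
        calc y ^ (b+1) * w + ((q : R) ^ b * (((q : R) ^ (b+1)
              - ((q⁻¹ : Rˣ) : R) ^ (b+1)) * ((u⁻¹ : Rˣ) : R)) * (q : R) ^ 2)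
              * (y ^ (b+1) * w)
            = ((1 : R) + (q : R) ^ b * (((q : R) ^ (b+1) - ((q⁻¹ : Rˣ) : R) ^ (b+1))
              * ((u⁻¹ : Rˣ) : R)) * (q : R) ^ 2) * (y ^ (b+1) * w) := by
              rw [add_mul, one_mul]
          _ = ((q : R) ^ (b+1) * (((q : R) ^ (b+1+1) - ((q⁻¹ : Rˣ) : R) ^ (b+1+1))
              * ((u⁻¹ : Rˣ) : R))) * (y ^ (b+1) * w) := by rw [keyR]
          _ = (q : R) ^ (b+1) * ((((q : R) ^ (b+1+1) - ((q⁻¹ : Rˣ) : R) ^ (b+1+1))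
              * ((u⁻¹ : Rˣ) : R)) * (y ^ (b+1) * w)) := by rw [mul_assoc]
      rw [hsum, mul_assoc]
end

section
/- Let q, μ, c be nonzero complex numbers with q^2 ≠ 1. Then there exists b ∈ ℂ* such that c = (q − q^{−1})^{−2}·(b − b^{−1})·(q·b^{−1}·μ − q^{−1}·b·μ^{−1}). -/
/-- Let `q, μ, c` be nonzero complex numbers with `q^2 ≠ 1`.  Then there
exists `b ∈ ℂ*` such that
`c = (q - q⁻¹)⁻² · (b - b⁻¹) · (q·b⁻¹·μ - q⁻¹·b·μ⁻¹)`. -/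
theorem exists_twist_parameter (q μ c : ℂ) (hq : q ≠ 0) (hμ : μ ≠ 0) (hc : c ≠ 0)
    (hq2 : q ^ 2 ≠ 1) :
    ∃ b : ℂ, b ≠ 0 ∧
      c = ((q - q⁻¹) ^ 2)⁻¹ * (b - b⁻¹) * (q * b⁻¹ * μ - q⁻¹ * b * μ⁻¹) := by
  have hq21 : q ^ 2 - 1 ≠ 0 := sub_ne_zero.mpr hq2
  obtain ⟨T, hT⟩ : ∃ T : ℂ, T = q^3*μ^2 + q - c*μ*(q^2-1)^2 := ⟨_, rfl⟩
  obtain ⟨e, he⟩ : ∃ e : ℂ, e ^ 2 = T ^ 2 - 4*q^4*μ^2 := by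
    obtain ⟨e, he⟩ := IsAlgClosed.exists_pow_nat_eq (T ^ 2 - 4*q^4*μ^2) (n := 2) (by norm_num)
    exact ⟨e, he⟩
  have hTe : T + e ≠ 0 := by
    intro h
    have hd : e = -T := by linear_combination h
    rw [hd] at he
    have : (4:ℂ)*q^4*μ^2 = 0 := by linear_combination he
    simp [hq, hμ] at this
  have hx : (T + e) / (2*q) ≠ 0 := by
    apply div_ne_zero hTe
    simp [hq]
  obtain ⟨b, hb⟩ : ∃ b : ℂ, b ^ 2 = (T + e) / (2*q) := by
    obtain ⟨b, hb⟩ := IsAlgClosed.exists_pow_nat_eq ((T + e) / (2*q)) (n := 2) (by norm_num)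
    exact ⟨b, hb⟩
  have hb0 : b ≠ 0 := by
    intro h; rw [h] at hb; simp at hb; exact hx hb.symm
  have key : q*b^4 - T*b^2 + q^3*μ^2 = 0 := by
    have h2 : (2:ℂ)*q ≠ 0 := by simp [hq]
    field_simp at hb
    have key' : 4*q^2*b^4 - 4*q*T*b^2 + 4*q^4*μ^2 = 0 := by
      linear_combination (2*q*b^2 + e - T) * hb + he
    have h4 : (4:ℂ)*q ≠ 0 := by simp [hq]
    apply mul_left_cancel₀ h4
    linear_combination key'
  refine ⟨b, hb0, ?_⟩
  have hqq : q - q⁻¹ ≠ 0 := by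
    intro h
    apply hq21
    field_simp at h
    linear_combination h
  have expand : (b - b⁻¹) * (q * b⁻¹ * μ - q⁻¹ * b * μ⁻¹) = c * (q - q⁻¹) ^ 2 := by
    rw [hT] at key
    field_simp
    linear_combination (-1) * key
  rw [mul_assoc, expand, mul_comm c, inv_mul_cancel_left₀ (pow_ne_zero 2 hqq)]
end

section
/- Let q, b, λ ∈ ℂ* with q^2 ≠ 1 and let V be a complex vector space with basis (v_i)_{i∈ℤ}. Define linear operators F, K, K', E on V by F v_i = v_{i+1}, K v_i = q^{−2i} b^{−2} λ v_i, K' v_i = q^{2i} b^{2} λ^{−1} v_i, and E v_i = (q^i b − q^{−i} b^{−1})(q^{1−i} b^{−1} λ − q^{i−1} b λ^{−1})/(q − q^{−1})^2 · v_{i−1}. Then K K' = K' K = id, K E = q^2 E K, K F = q^{−2} F K, and E F − F E = (K − K')/(q − q^{−1}). -/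
set_option maxHeartbeats 2000000


/-- Let `q, b, λ ∈ ℂ*` with `q^2 ≠ 1` and let `V` be a complex vector
space with basis `(v i)_{i ∈ ℤ}`.  Define linear operators `F, K, K', E` on `V` by
`F v_i = v_{i+1}`, `K v_i = q^{-2i} b^{-2} λ v_i`, `K' v_i = q^{2i} b^2 λ⁻¹ v_i`, and
`E v_i = (q^i b - q^{-i} b⁻¹)(q^{1-i} b⁻¹ λ - q^{i-1} b λ⁻¹)/(q - q⁻¹)^2 · v_{i-1}`.
Then `K K' = K' K = id`, `K E = q^2 E K`, `K F = q^{-2} F K`, and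
`E F - F E = (K - K')/(q - q⁻¹)`. -/
theorem twisted_sl2_module_relations (q b lam : ℂ)
    (hq : q ≠ 0) (hb : b ≠ 0) (hlam : lam ≠ 0) (hq2 : q ^ 2 ≠ 1)
    (V : Type*) [AddCommGroup V] [Module ℂ V] (v : Module.Basis ℤ ℂ V)
    (F K K' E : V →ₗ[ℂ] V)
    (hF : ∀ i : ℤ, F (v i) = v (i + 1))
    (hK : ∀ i : ℤ, K (v i) = (q ^ (-2 * i) * b⁻¹ ^ 2 * lam) • v i)
    (hK' : ∀ i : ℤ, K' (v i) = (q ^ (2 * i) * b ^ 2 * lam⁻¹) • v i)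
    (hE : ∀ i : ℤ, E (v i) =
      ((q ^ i * b - q ^ (-i) * b⁻¹) * (q ^ (1 - i) * b⁻¹ * lam - q ^ (i - 1) * b * lam⁻¹)
        / (q - q⁻¹) ^ 2) • v (i - 1)) :
    K ∘ₗ K' = LinearMap.id ∧ K' ∘ₗ K = LinearMap.id ∧
    K ∘ₗ E = (q ^ 2) • (E ∘ₗ K) ∧ K ∘ₗ F = (q ^ 2)⁻¹ • (F ∘ₗ K) ∧
    E ∘ₗ F - F ∘ₗ E = (q - q⁻¹)⁻¹ • (K - K') := by
  have hqq : q - q⁻¹ ≠ 0 := by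
    intro h
    apply hq2
    field_simp at h
    linear_combination h
  have hti : ∀ i : ℤ, q ^ i ≠ 0 := fun i => zpow_ne_zero i hq
  refine ⟨?_, ?_, ?_, ?_, ?_⟩ <;> apply Module.Basis.ext v <;> intro i <;>
    simp only [LinearMap.comp_apply, LinearMap.id_apply, LinearMap.smul_apply,
      LinearMap.sub_apply, hF, hK, hK', hE, map_smul, smul_smul, sub_smul, one_smul]
  · convert one_smul ℂ (v i) using 2
    simp only [zpow_add₀ hq, zpow_sub₀ hq, zpow_neg, zpow_one, two_mul, neg_mul]
    field_simp [hti i]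
  · convert one_smul ℂ (v i) using 2
    simp only [zpow_add₀ hq, zpow_sub₀ hq, zpow_neg, zpow_one, two_mul, neg_mul]
    field_simp [hti i]
  · congr 1
    simp only [zpow_add₀ hq, zpow_sub₀ hq, zpow_neg, zpow_one, two_mul, neg_mul]
    field_simp
  · congr 1
    simp only [zpow_add₀ hq, zpow_sub₀ hq, zpow_neg, zpow_one, two_mul, neg_mul]
    field_simp
  · simp only [add_sub_cancel_right, sub_add_cancel, smul_sub, smul_smul]
    rw [← sub_smul, ← sub_smul]
    congr 1
    rw [div_sub_div_same, ← mul_sub, ← div_eq_inv_mul, div_eq_div_iff (pow_ne_zero 2 hqq) hqq]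
    simp only [show (1 : ℤ) - (i + 1) = -i by ring, show i + 1 - 1 = i by ring]
    simp only [zpow_add₀ hq, zpow_sub₀ hq, zpow_neg, zpow_one, two_mul, neg_mul,
      add_sub_cancel_right, sub_add_cancel]
    ring
end

section
/- Let Φ be an irreducible root system with a fixed base Π of simple roots, and let γ ∈ Π. Then the set D(γ) of positive roots whose coefficient of γ (in the expansion in simple roots) is strictly positive generates the root lattice of Φ as a group. -/
open scoped RealInnerProductSpace

/-- A (finite, crystallographic) root system `Φ` in a real inner product space, together
with a base `B` of simple roots, assumed irreducible (connected Dynkin diagram). -/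
structure IrreducibleRootSystemWithBase (V : Type*) [NormedAddCommGroup V]
    [InnerProductSpace ℝ V] (Φ B : Finset V) : Prop where
  zero_not_mem : (0 : V) ∉ Φ
  base_subset : (B : Set V) ⊆ (Φ : Set V)
  base_indep : LinearIndependent ℝ (fun α : B => (α : V))
  reflect_mem : ∀ α ∈ Φ, ∀ β ∈ Φ, β - (2 * ⟪β, α⟫ / ⟪α, α⟫) • α ∈ Φ
  integrality : ∀ α ∈ Φ, ∀ β ∈ Φ, ∃ k : ℤ, 2 * ⟪β, α⟫ / ⟪α, α⟫ = (k : ℝ)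
  base_expand : ∀ β ∈ Φ, ∃ c : V → ℤ,
    β = ∑ α ∈ B, c α • α ∧ ((∀ α ∈ B, 0 ≤ c α) ∨ (∀ α ∈ B, c α ≤ 0))
  irreducible : ∀ B₁ B₂ : Finset V, (B₁ : Set V) ∪ (B₂ : Set V) = (B : Set V) →
    Disjoint (B₁ : Set V) (B₂ : Set V) →
    B₁.Nonempty → B₂.Nonempty → ∃ α ∈ B₁, ∃ α' ∈ B₂, ⟪α, α'⟫ ≠ 0


section Aux

variable {V : Type*} [NormedAddCommGroup V] [InnerProductSpace ℝ V] {Φ B : Finset V}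

namespace IrreducibleRootSystemWithBase

variable (h : IrreducibleRootSystemWithBase V Φ B)
include h

lemma inner_self_pos' {α : V} (hα : α ∈ Φ) : (0:ℝ) < ⟪α, α⟫ := by
  have hα0 : α ≠ 0 := by rintro rfl; exact h.zero_not_mem hα
  rw [real_inner_self_eq_norm_mul_norm]
  exact mul_pos (norm_pos_iff.mpr hα0) (norm_pos_iff.mpr hα0)

lemma neg_mem {α : V} (hα : α ∈ Φ) : -α ∈ Φ := by
  have hne : ⟪α, α⟫ ≠ (0:ℝ) := ne_of_gt (h.inner_self_pos' hα)
  have h2 : 2 * ⟪α, α⟫ / ⟪α, α⟫ = (2:ℝ) := by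
    field_simp
  have := h.reflect_mem α hα α hα
  rw [h2] at this
  have h3 : α - (2:ℝ) • α = -α := by
    rw [two_smul]; abel
  rwa [h3] at this

/-- Coefficients over the base are unique (a zero combination has zero coefficients). -/
lemma coeff_zero (c : V → ℝ) (hc : ∑ α ∈ B, c α • α = 0) : ∀ α ∈ B, c α = 0 := by
  have hI := linearIndependent_iff'.mp h.base_indep
  intro α hα
  have hs : ∑ i ∈ (Finset.univ : Finset B), c i • (i : V) = 0 := by
    rw [← hc]
    exact (Finset.sum_attach B fun x => c x • x).symm ▸ (B.sum_attach fun x => c x • x)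
  exact hI Finset.univ (fun i : B => c i) hs ⟨α, hα⟩ (Finset.mem_univ _)

/-- strict Cauchy–Schwarz given "no linear relation over the base". -/
lemma sq_lt {x y : V} (hx : x ≠ 0) (hy : y ≠ 0)
    (hind : ∀ s t : ℝ, s • x + t • y = 0 → s = 0) :
    ⟪x, y⟫ * ⟪x, y⟫ < ⟪x, x⟫ * ⟪y, y⟫ := by
  have hxn : (0:ℝ) < ‖x‖ := norm_pos_iff.mpr hx
  have hyn : (0:ℝ) < ‖y‖ := norm_pos_iff.mpr hy
  have h1 : ⟪x, y⟫ < ‖x‖ * ‖y‖ := by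
    rw [inner_lt_norm_mul_iff_real]
    intro hcon
    have : ‖y‖ • x + (-‖x‖) • y = 0 := by
      rw [neg_smul, hcon]; abel
    exact absurd (hind _ _ this) (by positivity)
  have h2 : -⟪x, y⟫ < ‖x‖ * ‖y‖ := by
    have hx' : ‖-x‖ = ‖x‖ := norm_neg x
    have := @inner_lt_norm_mul_iff_real V _ _ (-x) y
    rw [inner_neg_left, hx'] at this
    rw [this]
    intro hcon
    have : (-‖y‖) • x + (-‖x‖) • y = 0 := by
      have : ‖y‖ • (-x) = ‖x‖ • y := hcon
      rw [smul_neg] at this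
      rw [neg_smul, neg_smul, ← this]; abel
    have := hind _ _ this
    simp only [neg_eq_zero] at this
    exact absurd this (by positivity)
  have habs : |⟪x, y⟫| < ‖x‖ * ‖y‖ := abs_lt.mpr ⟨by linarith, h1⟩
  calc ⟪x, y⟫ * ⟪x, y⟫ = |⟪x, y⟫| * |⟪x, y⟫| := (abs_mul_abs_self _).symm
    _ < (‖x‖ * ‖y‖) * (‖x‖ * ‖y‖) := by
        exact mul_self_lt_mul_self (abs_nonneg _) habs
    _ = ⟪x, x⟫ * ⟪y, y⟫ := by
        rw [real_inner_self_eq_norm_mul_norm, real_inner_self_eq_norm_mul_norm]; ring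

/-- If `x, y` are roots, `⟪x,y⟫ < 0`, and strict Cauchy–Schwarz holds, then `x + y` is a root. -/
lemma add_mem {x y : V} (hx : x ∈ Φ) (hy : y ∈ Φ) (hneg : ⟪x, y⟫ < 0)
    (hsq : ⟪x, y⟫ * ⟪x, y⟫ < ⟪x, x⟫ * ⟪y, y⟫) : x + y ∈ Φ := by
  obtain ⟨k, hk⟩ := h.integrality y hy x hx   -- k = 2⟪x,y⟫/⟪y,y⟫
  obtain ⟨l, hl⟩ := h.integrality x hx y hy   -- l = 2⟪y,x⟫/⟪x,x⟫
  have hxx := h.inner_self_pos' hx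
  have hyy := h.inner_self_pos' hy
  have hyx : ⟪y, x⟫ < 0 := by rwa [real_inner_comm]
  have hkneg : (k:ℝ) < 0 := by
    rw [← hk]; exact div_neg_of_neg_of_pos (by linarith) hyy
  have hlneg : (l:ℝ) < 0 := by
    rw [← hl]; exact div_neg_of_neg_of_pos (by linarith) hxx
  have hk1 : k ≤ -1 := by have : k < 0 := by exact_mod_cast hkneg
                          omega
  have hl1 : l ≤ -1 := by have : l < 0 := by exact_mod_cast hlneg
                          omega
  have hkl : (k:ℝ) * l < 4 := by
    rw [← hk, ← hl]
    rw [div_mul_div_comm]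
    rw [div_lt_iff₀ (by positivity)]
    have : 2 * ⟪x, y⟫ * (2 * ⟪y, x⟫) = 4 * (⟪x, y⟫ * ⟪x, y⟫) := by
      rw [real_inner_comm y x]; ring
    rw [this]
    nlinarith
  have hor : k = -1 ∨ l = -1 := by
    by_contra hcon
    push_neg at hcon
    have hk2 : k ≤ -2 := by omega
    have hl2 : l ≤ -2 := by omega
    have : (4:ℝ) ≤ (k:ℝ) * l := by
      have : (4:ℤ) ≤ k * l := by nlinarith
      exact_mod_cast this
    linarith
  rcases hor with hk1' | hl1'
  · -- 2⟪x,y⟫/⟪y,y⟫ = -1, so s_y x = x + y ∈ Φ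
    have := h.reflect_mem y hy x hx
    rw [hk, hk1'] at this
    have he : x - ((-1:ℤ):ℝ) • y = x + y := by
      push_cast; rw [neg_smul, one_smul]; abel
    rwa [he] at this
  · have := h.reflect_mem x hx y hy
    rw [hl, hl1'] at this
    have he : y - ((-1:ℤ):ℝ) • x = x + y := by
      push_cast; rw [neg_smul, one_smul]; abel
    rwa [he] at this

/-- Distinct simple roots have nonpositive inner product. -/
lemma simple_inner_nonpos {a a' : V} (ha : a ∈ B) (ha' : a' ∈ B) (hne : a ≠ a') :
    ⟪a, a'⟫ ≤ 0 := by
  classical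
  by_contra hcon
  push_neg at hcon
  have haΦ : a ∈ Φ := h.base_subset ha
  have ha'Φ : a' ∈ Φ := h.base_subset ha'
  have hna' : -a' ∈ Φ := h.neg_mem ha'Φ
  have hneg : ⟪a, -a'⟫ < 0 := by rw [inner_neg_right]; linarith
  have hind : ∀ s t : ℝ, s • a + t • (-a') = 0 → s = 0 := by
    intro s t hst
    have hsum : ∑ x ∈ B, ((if x = a then s else 0) + (if x = a' then -t else 0)) • x = 0 := by
      have : ∀ x ∈ B, ((if x = a then s else 0) + (if x = a' then -t else 0)) • x
          = (if x = a then s • x else 0) + (if x = a' then (-t) • x else 0) := by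
        intro x hx
        by_cases h1 : x = a <;> by_cases h2 : x = a' <;> simp [h1, h2, add_smul]
      rw [Finset.sum_congr rfl this, Finset.sum_add_distrib,
        Finset.sum_ite_eq' B a (fun x => s • x), Finset.sum_ite_eq' B a' (fun x => (-t) • x),
        if_pos ha, if_pos ha']
      rw [smul_neg, ← neg_smul] at hst
      exact hst
    have := h.coeff_zero _ hsum a ha
    simpa [if_neg hne] using this
  have hsq := h.sq_lt (fun h0 => h.zero_not_mem (h0 ▸ haΦ))
    (fun h0 => h.zero_not_mem (h0 ▸ hna')) hind
  have hmem := h.add_mem haΦ hna' hneg hsq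
  obtain ⟨c, hc, hsign⟩ := h.base_expand _ hmem
  -- coefficients must be 1 at a and -1 at a'
  have hzero : ∑ x ∈ B, (((c x : ℝ)) - ((if x = a then 1 else 0) + (if x = a' then -1 else 0))) • x = 0 := by
    have h1 : ∑ x ∈ B, ((c x : ℝ)) • x = a + -a' := by
      rw [hc]
      exact Finset.sum_congr rfl fun x _ => Int.cast_smul_eq_zsmul ℝ (c x) x
    have h2 : ∑ x ∈ B, ((if x = a then (1:ℝ) else 0) + (if x = a' then -1 else 0)) • x = a + -a' := by
      have : ∀ x ∈ B, ((if x = a then (1:ℝ) else 0) + (if x = a' then -1 else 0)) • x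
          = (if x = a then (1:ℝ) • x else 0) + (if x = a' then (-1:ℝ) • x else 0) := by
        intro x hx
        by_cases h1 : x = a <;> by_cases h2 : x = a' <;> simp [h1, h2, add_smul]
      rw [Finset.sum_congr rfl this, Finset.sum_add_distrib,
        Finset.sum_ite_eq' B a (fun x => (1:ℝ) • x), Finset.sum_ite_eq' B a' (fun x => (-1:ℝ) • x),
        if_pos ha, if_pos ha']
      rw [one_smul, neg_smul, one_smul]
    simp only [sub_smul, Finset.sum_sub_distrib, h1, h2, sub_self]
  have hca : (c a : ℝ) = 1 := by
    have := h.coeff_zero _ hzero a ha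
    simp [hne] at this
    linarith
  have hca' : (c a' : ℝ) = -1 := by
    have := h.coeff_zero _ hzero a' ha'
    simp [Ne.symm hne] at this
    linarith
  rcases hsign with hs | hs
  · have := hs a' ha'
    have : (0:ℝ) ≤ (c a' : ℝ) := by exact_mod_cast this
    linarith
  · have := hs a ha
    have : (c a : ℝ) ≤ 0 := by exact_mod_cast this
    linarith

end IrreducibleRootSystemWithBase

end Aux

namespace IrreducibleRootSystemWithBase

variable {V : Type*} [NormedAddCommGroup V] [InnerProductSpace ℝ V] {Φ B : Finset V}

open scoped Classical

lemma key (h : IrreducibleRootSystemWithBase V Φ B) (γ : V) (hγ : γ ∈ B) :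
    ∀ n : ℕ, ∀ F : Finset V, F ⊆ B → γ ∈ F → (∑ x ∈ F, x) ∈ Φ →
      (↑F : Set V) ⊆ ↑(AddSubgroup.closure {β : V | β ∈ Φ ∧
        ∃ c : V → ℤ, β = ∑ α ∈ B, c α • α ∧ 0 < c γ}) →
      (B \ F).card = n →
      (B : Set V) ⊆ ↑(AddSubgroup.closure {β : V | β ∈ Φ ∧
        ∃ c : V → ℤ, β = ∑ α ∈ B, c α • α ∧ 0 < c γ}) := by
  classical
  intro n
  induction n with
  | zero =>
    intro F hFB hγF hsum hFcl hcard
    have hBF : B ⊆ F := by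
      have : B \ F = ∅ := Finset.card_eq_zero.mp hcard
      intro x hx
      by_contra hxF
      exact (Finset.notMem_empty x) (this ▸ Finset.mem_sdiff.mpr ⟨hx, hxF⟩)
    intro x hx
    exact hFcl (by exact_mod_cast hBF (by exact_mod_cast hx))
  | succ n ih =>
    intro F hFB hγF hsum hFcl hcard
    have hne : (B \ F).Nonempty := Finset.card_pos.mp (by omega)
    have hunion : (↑F : Set V) ∪ ↑(B \ F) = (↑B : Set V) := by
      rw [← Finset.coe_union, Finset.union_sdiff_of_subset hFB]
    have hdisj : Disjoint (↑F : Set V) (↑(B \ F) : Set V) := by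
      rw [Finset.disjoint_coe]; exact Finset.disjoint_sdiff
    obtain ⟨α, hαF, α', hα'S, hne0⟩ := h.irreducible F (B \ F) hunion hdisj ⟨γ, hγF⟩ hne
    obtain ⟨hα'B, hα'F⟩ := Finset.mem_sdiff.mp hα'S
    have hα'Φ : α' ∈ Φ := h.base_subset hα'B
    have hβΦ : (∑ x ∈ F, x) ∈ Φ := hsum
    have hinner : ⟪(∑ x ∈ F, x), α'⟫ < 0 := by
      rw [sum_inner]
      have hle : ∀ x ∈ F, ⟪x, α'⟫ ≤ (0:ℝ) := fun x hx =>
        h.simple_inner_nonpos (hFB hx) hα'B (by rintro rfl; exact hα'F hx)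
      calc ∑ x ∈ F, ⟪x, α'⟫ < ∑ _x ∈ F, (0:ℝ) :=
            Finset.sum_lt_sum hle ⟨α, hαF, lt_of_le_of_ne (hle α hαF) hne0⟩
        _ = 0 := Finset.sum_const_zero
    have hneg' : ⟪α', (∑ x ∈ F, x)⟫ < 0 := by rwa [real_inner_comm]
    have hind : ∀ s t : ℝ, s • α' + t • (∑ x ∈ F, x) = 0 → s = 0 := by
      intro s t hst
      have hsum0 : ∑ x ∈ B, ((if x = α' then s else 0) + (if x ∈ F then t else 0)) • x = 0 := by
        have hcong : ∀ x ∈ B, ((if x = α' then s else 0) + (if x ∈ F then t else 0)) • x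
            = (if x = α' then s • x else 0) + (if x ∈ F then t • x else 0) := by
          intro x hx
          by_cases h1 : x = α' <;> by_cases h2 : x ∈ F <;> simp [h1, h2, add_smul]
        rw [Finset.sum_congr rfl hcong, Finset.sum_add_distrib,
          Finset.sum_ite_eq' B α' (fun x => s • x), if_pos hα'B,
          Finset.sum_ite_mem B F (fun x => t • x), Finset.inter_eq_right.mpr hFB,
          ← Finset.smul_sum]
        exact hst
      have := h.coeff_zero _ hsum0 α' hα'B
      simpa [hα'F] using this
    have hsq := h.sq_lt (fun h0 => h.zero_not_mem (h0 ▸ hα'Φ))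
      (fun h0 => h.zero_not_mem (h0 ▸ hβΦ)) hind
    have haddΦ : α' + (∑ x ∈ F, x) ∈ Φ := h.add_mem hα'Φ hβΦ hneg' hsq
    -- membership of the two sums in D(γ)
    have hcoeff : ∀ G : Finset V, G ⊆ B →
        ∑ x ∈ B, (if x ∈ G then (1:ℤ) else 0) • x = ∑ x ∈ G, x := by
      intro G hGB
      have : ∀ x ∈ B, (if x ∈ G then (1:ℤ) else 0) • x = (if x ∈ G then x else 0) := by
        intro x hx; split <;> simp
      rw [Finset.sum_congr rfl this, Finset.sum_ite_mem B G (fun x => x),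
        Finset.inter_eq_right.mpr hGB]
    have hβD : (∑ x ∈ F, x) ∈ {β : V | β ∈ Φ ∧
        ∃ c : V → ℤ, β = ∑ α ∈ B, c α • α ∧ 0 < c γ} :=
      ⟨hβΦ, fun x => if x ∈ F then 1 else 0, (hcoeff F hFB).symm, by simp [hγF]⟩
    have haddD : α' + (∑ x ∈ F, x) ∈ {β : V | β ∈ Φ ∧
        ∃ c : V → ℤ, β = ∑ α ∈ B, c α • α ∧ 0 < c γ} := by
      refine ⟨haddΦ, fun x => if x ∈ insert α' F then 1 else 0, ?_, by simp [hγF]⟩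
      rw [hcoeff (insert α' F) (Finset.insert_subset hα'B hFB), Finset.sum_insert hα'F]
    have hα'cl : α' ∈ AddSubgroup.closure {β : V | β ∈ Φ ∧
        ∃ c : V → ℤ, β = ∑ α ∈ B, c α • α ∧ 0 < c γ} := by
      have h1 := AddSubgroup.subset_closure haddD
      have h2 := AddSubgroup.subset_closure hβD
      have h3 := AddSubgroup.sub_mem _ h1 h2
      simpa using h3
    refine ih (insert α' F) (Finset.insert_subset hα'B hFB) (Finset.mem_insert_of_mem hγF)
      ?_ ?_ ?_
    · rwa [Finset.sum_insert hα'F]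
    · rw [Finset.coe_insert]
      exact Set.insert_subset hα'cl hFcl
    · rw [Finset.sdiff_insert, Finset.card_erase_of_mem hα'S, hcard]
      omega

end IrreducibleRootSystemWithBase
/-- Let `Φ` be an irreducible root system with a fixed base `B` of simple
roots, and let `γ ∈ B`.  Then the set `D(γ)` of (positive) roots whose coefficient of
`γ` in the expansion in simple roots is strictly positive generates the root lattice
(the subgroup of `V` generated by `B`). -/
theorem D_gamma_generates_root_lattice (V : Type*) [NormedAddCommGroup V]
    [InnerProductSpace ℝ V] (Φ B : Finset V)
    (h : IrreducibleRootSystemWithBase V Φ B) (γ : V) (hγ : γ ∈ B) :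
    AddSubgroup.closure {β : V | β ∈ Φ ∧
        ∃ c : V → ℤ, β = ∑ α ∈ B, c α • α ∧ 0 < c γ}
      = AddSubgroup.closure (B : Set V) := by
  classical
  apply le_antisymm
  · rw [AddSubgroup.closure_le]
    rintro β ⟨hβΦ, c, hc, -⟩
    rw [hc]
    exact AddSubgroup.sum_mem _ fun α hα =>
      AddSubgroup.zsmul_mem _ (AddSubgroup.subset_closure (by exact_mod_cast hα)) (c α)
  · rw [AddSubgroup.closure_le]
    have hγΦ : γ ∈ Φ := h.base_subset hγ
    set G : Finset V := {γ} with hG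
    have hGB : G ⊆ B := by simp [hG, hγ]
    refine h.key γ hγ (B \ G).card G hGB (by simp [hG]) ?_ ?_ rfl
    · simpa [hG] using hγΦ
    · intro x hx
      rw [hG] at hx
      rw [Finset.coe_singleton, Set.mem_singleton_iff] at hx
      subst hx
      refine AddSubgroup.subset_closure
        ⟨hγΦ, fun y => if y ∈ G then 1 else 0, ?_, by simp [hG]⟩
      have h1 : ∀ y ∈ B, (if y ∈ G then (1:ℤ) else 0) • y
          = (if y ∈ G then y else 0) := by intro y hy; split <;> simp
      rw [Finset.sum_congr rfl h1, Finset.sum_ite_mem B G (fun y => y),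
        Finset.inter_eq_right.mpr hGB]
      simp [hG]
end

section
/- Let Φ be a root system, and let F and T be subsets of Φ with Φ = F ∪ T, F ∩ T = ∅, F = −F, T = −T, and both F and T closed (i.e., if β, γ lie in the subset and β + γ ∈ Φ, then β + γ lies in the subset). If α and α' are simple roots (with respect to a fixed base) such that α + α' ∈ Φ and α ∈ F, then α' ∈ F. -/
open scoped RealInnerProductSpace

/-- A (finite, crystallographic) root system `Φ` in a real inner product space, together
with a fixed base `B` of simple roots. -/
structure RootSystemWithBase (V : Type*) [NormedAddCommGroup V]
    [InnerProductSpace ℝ V] (Φ B : Finset V) : Prop where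
  zero_not_mem : (0 : V) ∉ Φ
  base_subset : (B : Set V) ⊆ (Φ : Set V)
  base_indep : LinearIndependent ℝ (fun α : B => (α : V))
  reflect_mem : ∀ α ∈ Φ, ∀ β ∈ Φ, β - (2 * ⟪β, α⟫ / ⟪α, α⟫) • α ∈ Φ
  integrality : ∀ α ∈ Φ, ∀ β ∈ Φ, ∃ k : ℤ, 2 * ⟪β, α⟫ / ⟪α, α⟫ = (k : ℝ)
  base_expand : ∀ β ∈ Φ, ∃ c : V → ℤ,
    β = ∑ α ∈ B, c α • α ∧ ((∀ α ∈ B, 0 ≤ c α) ∨ (∀ α ∈ B, c α ≤ 0))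

/-- Let `Φ` be a root system, and `F, T ⊆ Φ` with `Φ = F ∪ T`,
`F ∩ T = ∅`, `F = -F`, `T = -T`, and both `F` and `T` closed.  If `α, α'` are simple
roots with `α + α' ∈ Φ` and `α ∈ F`, then `α' ∈ F`. -/
theorem closed_symmetric_partition_connected_step (V : Type*) [NormedAddCommGroup V]
    [InnerProductSpace ℝ V] (Φ B : Finset V) (h : RootSystemWithBase V Φ B)
    (F T : Set V)
    (hunion : F ∪ T = (Φ : Set V)) (hdisj : F ∩ T = ∅)
    (hFsymm : ∀ x, x ∈ F ↔ -x ∈ F) (hTsymm : ∀ x, x ∈ T ↔ -x ∈ T)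
    (hFclosed : ∀ x ∈ F, ∀ y ∈ F, x + y ∈ (Φ : Set V) → x + y ∈ F)
    (hTclosed : ∀ x ∈ T, ∀ y ∈ T, x + y ∈ (Φ : Set V) → x + y ∈ T)
    (α α' : V) (hα : α ∈ B) (hα' : α' ∈ B) (hsum : α + α' ∈ Φ) (hαF : α ∈ F) :
    α' ∈ F := by
  have hαΦ : α ∈ (Φ : Set V) := h.base_subset hα
  have hα'Φ : α' ∈ (Φ : Set V) := h.base_subset hα'
  have hα'FT : α' ∈ F ∪ T := hunion ▸ hα'Φ
  rcases hα'FT with h1 | hα'T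
  · exact h1
  exfalso
  have hsumFT : α + α' ∈ F ∪ T := hunion ▸ (by exact_mod_cast hsum)
  rcases hsumFT with hs | hs
  · have : (α + α') + (-α) ∈ F :=
      hFclosed _ hs _ ((hFsymm α).mp hαF) (by simpa using hα'Φ)
    have hα'F : α' ∈ F := by simpa using this
    exact Set.eq_empty_iff_forall_notMem.mp hdisj α' ⟨hα'F, hα'T⟩
  · have : (α + α') + (-α') ∈ T :=
      hTclosed _ hs _ ((hTsymm α').mp hα'T) (by simpa using hαΦ)
    have hαT : α ∈ T := by simpa using this
    exact Set.eq_empty_iff_forall_notMem.mp hdisj α ⟨hαF, hαT⟩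
end

section
/- Let q ∈ ℂ* with q^2 ≠ 1 and q^4 ≠ 1, and for n ∈ ℤ set [n] = (q^n − q^{−n})/(q − q^{−1}). Let V = ℂ[X] and define linear operators on V by E X^a = −([a][a−1]/[2]) X^{a−2}, F X^a = (1/[2]) X^{a+2}, K X^a = q^{−(2a+1)} X^a, K' X^a = q^{2a+1} X^a. Then K K' = K' K = id, K E = q^4 E K, K F = q^{−4} F K, and E F − F E = (K − K')/(q^2 − q^{−2}). -/
/-- The quantum integer `[n] = (q^n - q^(-n))/(q - q⁻¹)` for `n : ℤ`. -/
noncomputable def qint (q : ℂ) (n : ℤ) : ℂ := (q ^ n - q ^ (-n)) / (q - q⁻¹)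

open Polynomial


lemma qint_zero (q : ℂ) : qint q 0 = 0 := by simp [qint]

lemma ext_pow {f g : Polynomial ℂ →ₗ[ℂ] Polynomial ℂ}
    (h : ∀ n : ℕ, f (X ^ n) = g (X ^ n)) : f = g := by
  apply Polynomial.lhom_ext'
  intro n
  ext c
  simp only [LinearMap.comp_apply]
  rw [← C_mul_X_pow_eq_monomial, ← smul_eq_C_mul, map_smul, map_smul, h]

lemma lemA (q : ℂ) (n : ℤ) (hq : q ≠ 0) :
    qint q n * qint q (n-1) - qint q (n+2) * qint q (n+1)
      = -(qint q 2 * qint q (2*n+1)) := by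
  have hu : q ^ n ≠ 0 := zpow_ne_zero _ hq
  simp only [qint, div_mul_div_comm]
  rw [div_sub_div_same, ← neg_div]
  congr 1
  rw [two_mul]
  simp only [neg_add, neg_sub, zpow_add₀ hq, zpow_sub₀ hq, zpow_neg, zpow_one,
    show (2:ℤ)=1+1 by norm_num]
  generalize q ^ n = u at hu ⊢
  simp only [div_eq_mul_inv]
  linear_combination (u*u⁻¹*(q+q⁻¹) - u^2*q⁻¹ - u⁻¹^2*q) * (mul_inv_cancel₀ hq)

lemma qint_two (q : ℂ) (hq : q ≠ 0) (hs : q - q⁻¹ ≠ 0) : qint q 2 = q + q⁻¹ := by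
  unfold qint
  rw [show (2:ℤ) = 1+1 by norm_num]
  simp only [neg_add, zpow_add₀ hq, zpow_neg, zpow_one]
  rw [div_eq_iff hs]
  ring

lemma scalarEF (q : ℂ) (n : ℤ) (hq : q ≠ 0) (hq2 : q^2 ≠ 1) (hq4 : q^4 ≠ 1) :
    (qint q 2)⁻¹ * -(qint q (n+2) * qint q (n+1) / qint q 2)
      - (-(qint q n * qint q (n-1) / qint q 2)) * (qint q 2)⁻¹
    = (q^2 - (q^2)⁻¹)⁻¹ * (q^(-(2*n+1)) - q^(2*n+1)) := by
  have hs : q - q⁻¹ ≠ 0 := by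
    intro h; apply hq2; field_simp at h; linear_combination h
  have hqq : q + q⁻¹ ≠ 0 := by
    intro h
    apply hq4
    have h' : q^2 + 1 = 0 := by field_simp at h; linear_combination h
    linear_combination (q^2 - 1) * h'
  have h2 : qint q 2 ≠ 0 := by rw [qint_two q hq hs]; exact hqq
  have hB : q^2 - (q^2)⁻¹ ≠ 0 := by
    intro h
    apply hq4
    have := pow_ne_zero 2 hq
    field_simp at h
    linear_combination h
  have hBz : (q:ℂ)^((2:ℤ)) - q^((-2:ℤ)) = q^2 - (q^2)⁻¹ := by
    rw [show ((-2:ℤ)) = -(2:ℤ) by norm_num, zpow_neg,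
      show (2:ℤ) = ((2:ℕ):ℤ) by norm_num, zpow_natCast]
  have hA := lemA q n hq
  have hrhs : (q^2 - (q^2)⁻¹)⁻¹ * (q^(-(2*n+1)) - q^(2*n+1))
      = -(qint q (2*n+1) / qint q 2) := by
    unfold qint
    rw [div_div_div_cancel_right₀]
    · rw [show q^(-(2*n+1)) - q^(2*n+1) = -(q^(2*n+1) - q^(-(2*n+1))) by ring,
        mul_neg, inv_mul_eq_div, hBz]
    · exact hs
  rw [hrhs]
  field_simp
  linear_combination hA

set_option maxHeartbeats 1000000 in
/-- Let `q ∈ ℂ*` with `q^2 ≠ 1` and `q^4 ≠ 1`.  Let `V = ℂ[X]` and define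
linear operators on `V` by `E X^a = -([a][a-1]/[2]) X^(a-2)`, `F X^a = (1/[2]) X^(a+2)`,
`K X^a = q^{-(2a+1)} X^a`, `K' X^a = q^{2a+1} X^a`.  Then `K K' = K' K = id`,
`K E = q^4 E K`, `K F = q^{-4} F K`, and `E F - F E = (K - K')/(q^2 - q^{-2})`. -/
theorem shale_weil_rank_one_relations (q : ℂ) (hq : q ≠ 0)
    (hq2 : q ^ 2 ≠ 1) (hq4 : q ^ 4 ≠ 1)
    (E F K K' : Polynomial ℂ →ₗ[ℂ] Polynomial ℂ)
    (hE : ∀ a : ℕ, E (X ^ a) =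
      (-(qint q a * qint q ((a : ℤ) - 1) / qint q 2)) • X ^ (a - 2))
    (hF : ∀ a : ℕ, F (X ^ a) = ((qint q 2)⁻¹) • X ^ (a + 2))
    (hK : ∀ a : ℕ, K (X ^ a) = (q ^ (-(2 * (a : ℤ) + 1))) • X ^ a)
    (hK' : ∀ a : ℕ, K' (X ^ a) = (q ^ (2 * (a : ℤ) + 1)) • X ^ a) :
    K ∘ₗ K' = LinearMap.id ∧ K' ∘ₗ K = LinearMap.id ∧
    K ∘ₗ E = (q ^ 4) • (E ∘ₗ K) ∧ K ∘ₗ F = (q ^ 4)⁻¹ • (F ∘ₗ K) ∧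
    E ∘ₗ F - F ∘ₗ E = (q ^ 2 - (q ^ 2)⁻¹)⁻¹ • (K - K') := by
  refine ⟨?_, ?_, ?_, ?_, ?_⟩
  · apply ext_pow; intro n
    simp only [LinearMap.comp_apply, LinearMap.id_apply, hK', map_smul, hK, smul_smul]
    rw [← zpow_add₀ hq, show (2*(n:ℤ)+1) + -(2*(n:ℤ)+1) = 0 by ring, zpow_zero, one_smul]
  · apply ext_pow; intro n
    simp only [LinearMap.comp_apply, LinearMap.id_apply, hK, map_smul, hK', smul_smul]
    rw [← zpow_add₀ hq, show -(2*(n:ℤ)+1) + (2*(n:ℤ)+1) = 0 by ring, zpow_zero, one_smul]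
  · apply ext_pow; intro n
    match n with
    | 0 =>
      simp only [LinearMap.comp_apply, LinearMap.smul_apply, hE, hK, map_smul, smul_smul]
      norm_num [qint_zero]
    | 1 =>
      simp only [LinearMap.comp_apply, LinearMap.smul_apply, hE, hK, map_smul, smul_smul]
      norm_num [qint_zero]
    | (m+2) =>
      have e : q^(-(2*(m:ℤ)+1)) = q^4 * q^(-(2*((m:ℤ)+2)+1)) := by
        rw [← zpow_natCast q 4, ← zpow_add₀ hq]; congr 1 <;> push_cast <;> ring
      simp only [LinearMap.comp_apply, LinearMap.smul_apply, hE, hK, map_smul, smul_smul,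
        Nat.add_sub_cancel]
      congr 1
      push_cast
      rw [e]; ring
  · apply ext_pow; intro n
    have e : q^(-(2*((n:ℤ)+2)+1)) = (q^4)⁻¹ * q^(-(2*(n:ℤ)+1)) := by
      rw [← zpow_natCast q 4, ← zpow_neg, ← zpow_add₀ hq]; congr 1 <;> push_cast <;> ring
    simp only [LinearMap.comp_apply, LinearMap.smul_apply, hF, hK, map_smul, smul_smul]
    congr 1
    push_cast
    rw [e]; ring
  · apply ext_pow; intro n
    match n with
    | 0 =>
      have h0 := scalarEF q 0 hq hq2 hq4
      norm_num [qint_zero] at h0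
      simp only [LinearMap.sub_apply, LinearMap.comp_apply, LinearMap.smul_apply,
        hE, hF, hK, hK', map_smul, smul_smul]
      match_scalars
      · norm_num
        linear_combination h0
      · norm_num [qint_zero]
    | 1 =>
      have h1 := scalarEF q 1 hq hq2 hq4
      norm_num [qint_zero] at h1
      simp only [LinearMap.sub_apply, LinearMap.comp_apply, LinearMap.smul_apply,
        hE, hF, hK, hK', map_smul, smul_smul]
      match_scalars
      · norm_num
        linear_combination h1
      · norm_num [qint_zero]
    | (m+2) =>
      have hm := scalarEF q ((m:ℤ)+2) hq hq2 hq4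
      simp only [LinearMap.sub_apply, LinearMap.comp_apply, LinearMap.smul_apply,
        hE, hF, hK, hK', map_smul, smul_smul, Nat.add_sub_cancel]
      match_scalars
      push_cast
      ring_nf at hm ⊢
      linear_combination hm
end
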